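/- arXiv:2112.06321 — 5 statements merged into one kernel-verified Lean document; each statement's English description precedes it below -/
import Mathlib

section
/- Let A and B be monic finite Blaschke products of degree n (i.e., rational functions of the form prod_{j=1}^n (z-a_j)/(1-conj(a_j)z) with all a_j in the open unit disk). Then there exists a point lambda on the unit circle such that A(lambda) = B(lambda). -/
open Complex Finset Metric

private lemma re_pos_aux {a z : ℂ} (ha : ‖a‖ < 1) (hz : ‖z‖ ≤ 1) : 0 < (1 - a * z).re := by
  have h1 : ‖a * z‖ < 1 := by
    calc ‖a * z‖ = ‖a‖ * ‖z‖ := norm_mul a z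
      _ ≤ ‖a‖ * 1 := by nlinarith [norm_nonneg a]
      _ < 1 := by simpa using ha
  have h2 : (a * z).re ≤ ‖a * z‖ := by
    simpa using Complex.re_le_norm (a * z)
  simp only [Complex.sub_re, Complex.one_re]
  linarith

private lemma exists_zero_of_integral_zero (u : ℝ → ℝ) (hu : Continuous u)
    (hint : (∫ θ in (0:ℝ)..(2*Real.pi), u θ) = 0) : ∃ θ, u θ = 0 := by
  have key : ∀ (u : ℝ → ℝ), Continuous u → (∫ θ in (0:ℝ)..(2*Real.pi), u θ) = 0 →
      0 < u 0 → ∃ θ, u θ = 0 := by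
    intro u hu hint h0
    by_contra hne
    push_neg at hne
    have hpos : ∀ θ, 0 < u θ := by
      intro θ
      rcases (hne θ).lt_or_gt with h | h
      · exfalso
        obtain ⟨c, -, hc⟩ := intermediate_value_uIcc (a := θ) (b := 0) hu.continuousOn
          (Set.mem_uIcc.2 (Or.inl ⟨h.le, h0.le⟩))
        exact hne c hc
      · exact h
    have hgt := intervalIntegral.intervalIntegral_pos_of_pos (f := u) (hu.intervalIntegrable 0 (2*Real.pi))
      hpos (by positivity)
    linarith
  rcases eq_or_ne (u 0) 0 with h | h
  · exact ⟨0, h⟩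
  rcases h.lt_or_gt with h | h
  · obtain ⟨θ, hθ⟩ := key (fun t => -u t) hu.neg
      (by rw [intervalIntegral.integral_neg, hint, neg_zero]) (by simpa using h)
    exact ⟨θ, by simpa using hθ⟩
  · exact key u hu hint h

/-- If `A` and `B` are monic Blaschke products of degree `n` (with zeros `a j`, `b j`
in the open unit disk), then there exists `lam` on the unit circle with `A lam = B lam`. -/
theorem stmt_0 (n : ℕ) (a b : Fin n → ℂ)
    (ha : ∀ j, ‖a j‖ < 1) (hb : ∀ j, ‖b j‖ < 1) :
    ∃ lam : ℂ, ‖lam‖ = 1 ∧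
      (∏ j, (lam - a j) / (1 - (starRingEnd ℂ) (a j) * lam)) =
      (∏ j, (lam - b j) / (1 - (starRingEnd ℂ) (b j) * lam)) := by
  classical
  set f : ℂ → ℂ := fun z => ∑ j, (Complex.log (1 - a j * z) - Complex.log (1 - b j * z))
    with hf_def
  -- differentiability on the closed unit ball
  have hdiff : ∀ z ∈ closedBall (0:ℂ) 1, DifferentiableAt ℂ f z := by
    intro z hz
    rw [mem_closedBall, dist_zero_right] at hz
    apply DifferentiableAt.fun_sum
    intro j _
    have h1 : DifferentiableAt ℂ (fun w : ℂ => 1 - a j * w) z :=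
      (differentiableAt_const _).sub (differentiableAt_id.const_mul _)
    have h2 : DifferentiableAt ℂ (fun w : ℂ => 1 - b j * w) z :=
      (differentiableAt_const _).sub (differentiableAt_id.const_mul _)
    exact (h1.clog (Or.inl (re_pos_aux (ha j) hz))).sub
      (h2.clog (Or.inl (re_pos_aux (hb j) hz)))
  have hdc : DiffContOnCl ℂ f (ball (0:ℂ) 1) :=
    ⟨fun z hz => (hdiff z (ball_subset_closedBall hz)).differentiableWithinAt,
     fun z hz => (hdiff z (by
        rwa [closure_ball (0:ℂ) one_ne_zero] at hz)).continuousAt.continuousWithinAt⟩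
  have hf0 : f 0 = 0 := by simp [hf_def]
  -- Cauchy integral formula at 0
  have hc := hdc.circleIntegral_sub_inv_smul (mem_ball_self one_pos)
  rw [hf0, smul_zero, circleIntegral] at hc
  have hmem : ∀ θ : ℝ, circleMap 0 1 θ ∈ closedBall (0:ℂ) 1 := by
    intro θ
    rw [mem_closedBall, dist_zero_right]
    simp
  have hcm_ne : ∀ θ : ℝ, circleMap 0 1 θ ≠ 0 := fun θ =>
    circleMap_ne_center (one_ne_zero) (θ := θ)
  have hsimp : ∀ θ : ℝ, deriv (circleMap 0 1) θ •
      ((circleMap 0 1 θ - 0)⁻¹ • f (circleMap 0 1 θ)) = I * f (circleMap 0 1 θ) := by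
    intro θ
    rw [deriv_circleMap]
    have h := hcm_ne θ
    field_simp
    ring_nf
    rw [mul_inv_cancel_right₀ h]
  simp_rw [hsimp] at hc
  rw [intervalIntegral.integral_const_mul] at hc
  have hInt : (∫ θ in (0:ℝ)..(2*Real.pi), f (circleMap 0 1 θ)) = 0 := by
    have := mul_eq_zero.1 hc
    rcases this with h | h
    · exact absurd h I_ne_zero
    · exact h
  -- continuity of the boundary values
  have hg : Continuous fun θ : ℝ => f (circleMap 0 1 θ) := by
    apply continuous_iff_continuousAt.2
    intro θ
    exact ((hdiff _ (hmem θ)).continuousAt).comp (continuous_circleMap 0 1).continuousAt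
  have huc : Continuous fun θ : ℝ => (f (circleMap 0 1 θ)).im :=
    Complex.continuous_im.comp hg
  have huint : (∫ θ in (0:ℝ)..(2*Real.pi), (f (circleMap 0 1 θ)).im) = 0 := by
    have := Complex.imCLM.intervalIntegral_comp_comm
      ((hg.intervalIntegrable 0 (2*Real.pi)) : IntervalIntegrable _ MeasureTheory.volume 0 (2*Real.pi))
    simp only [Complex.imCLM_apply] at this
    rw [this, hInt]
    simp
  obtain ⟨θ₀, hθ₀⟩ := exists_zero_of_integral_zero _ huc huint
  set μ : ℂ := circleMap 0 1 θ₀ with hμ_def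
  have hμnorm : ‖μ‖ = 1 := by simp [hμ_def]
  refine ⟨(starRingEnd ℂ) μ, by simpa using hμnorm, ?_⟩
  set lam : ℂ := (starRingEnd ℂ) μ with hlam_def
  have hlamu : lam * μ = 1 := by
    rw [hlam_def, mul_comm, Complex.mul_conj, Complex.normSq_eq_norm_sq]
    simp [hμnorm]
  have hμle : ‖μ‖ ≤ 1 := le_of_eq hμnorm
  have hane : ∀ j, (1 - a j * μ) ≠ 0 := by
    intro j h
    have := re_pos_aux (ha j) hμle
    rw [h] at this; simp at this
  have hbne : ∀ j, (1 - b j * μ) ≠ 0 := by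
    intro j h
    have := re_pos_aux (hb j) hμle
    rw [h] at this; simp at this
  -- rewrite each side
  have hside : ∀ c : Fin n → ℂ,
      (∏ j, (lam - c j) / (1 - (starRingEnd ℂ) (c j) * lam)) =
      lam ^ n * (∏ j, (1 - c j * μ)) / (starRingEnd ℂ) (∏ j, (1 - c j * μ)) := by
    intro c
    have hfac : ∀ j : Fin n, (lam - c j) / (1 - (starRingEnd ℂ) (c j) * lam) =
        (lam * (1 - c j * μ)) / ((starRingEnd ℂ) (1 - c j * μ)) := by
      intro j
      have hnum : lam * (1 - c j * μ) = lam - c j := by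
        have h' : lam * (c j * μ) = c j * (lam * μ) := by ring
        rw [mul_sub, mul_one, h', hlamu, mul_one]
      have hden : (starRingEnd ℂ) (1 - c j * μ) = 1 - (starRingEnd ℂ) (c j) * lam := by
        rw [map_sub, map_one, map_mul, hlam_def]
      rw [hnum, hden]
    calc (∏ j, (lam - c j) / (1 - (starRingEnd ℂ) (c j) * lam))
        = ∏ j, (lam * (1 - c j * μ)) / ((starRingEnd ℂ) (1 - c j * μ)) :=
          Finset.prod_congr rfl fun j _ => hfac j
      _ = (∏ j, lam * (1 - c j * μ)) / (∏ j, (starRingEnd ℂ) (1 - c j * μ)) :=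
          Finset.prod_div_distrib _ _
      _ = lam ^ n * (∏ j, (1 - c j * μ)) / (starRingEnd ℂ) (∏ j, (1 - c j * μ)) := by
          rw [Finset.prod_mul_distrib, Finset.prod_const, Finset.card_univ,
            Fintype.card_fin, map_prod]
  rw [hside a, hside b]
  -- the key identity via exp/log
  set Sa : ℂ := ∑ j, Complex.log (1 - a j * μ) with hSa_def
  set Sb : ℂ := ∑ j, Complex.log (1 - b j * μ) with hSb_def
  have hPa : (∏ j, (1 - a j * μ)) = Complex.exp Sa := by
    rw [hSa_def, Complex.exp_sum]
    exact Finset.prod_congr rfl fun j _ => (Complex.exp_log (hane j)).symm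
  have hPb : (∏ j, (1 - b j * μ)) = Complex.exp Sb := by
    rw [hSb_def, Complex.exp_sum]
    exact Finset.prod_congr rfl fun j _ => (Complex.exp_log (hbne j)).symm
  have him : Sa.im = Sb.im := by
    have : (f μ).im = Sa.im - Sb.im := by
      simp only [hf_def, hSa_def, hSb_def, Complex.im_sum, Complex.sub_im,
        Finset.sum_sub_distrib]
    have h0 : (f μ).im = 0 := hθ₀
    rw [this] at h0
    linarith
  have hkey : (∏ j, (1 - a j * μ)) * (starRingEnd ℂ) (∏ j, (1 - b j * μ)) =
      (starRingEnd ℂ) (∏ j, (1 - a j * μ)) * (∏ j, (1 - b j * μ)) := by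
    rw [hPa, hPb, ← Complex.exp_conj, ← Complex.exp_conj, ← Complex.exp_add,
      ← Complex.exp_add]
    congr 1
    apply Complex.ext
    · simp
    · simp only [Complex.add_im, Complex.conj_im]
      linarith
  have hPane : (∏ j, (1 - a j * μ)) ≠ 0 := Finset.prod_ne_zero_iff.2 fun j _ => hane j
  have hPbne : (∏ j, (1 - b j * μ)) ≠ 0 := Finset.prod_ne_zero_iff.2 fun j _ => hbne j
  have hcPane : (starRingEnd ℂ) (∏ j, (1 - a j * μ)) ≠ 0 := by
    rwa [map_ne_zero]
  have hcPbne : (starRingEnd ℂ) (∏ j, (1 - b j * μ)) ≠ 0 := by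
    rwa [map_ne_zero]
  rw [div_eq_div_iff hcPane hcPbne]
  calc lam ^ n * (∏ j, (1 - a j * μ)) * (starRingEnd ℂ) (∏ j, (1 - b j * μ))
      = lam ^ n * ((∏ j, (1 - a j * μ)) * (starRingEnd ℂ) (∏ j, (1 - b j * μ))) := by ring
    _ = lam ^ n * ((starRingEnd ℂ) (∏ j, (1 - a j * μ)) * (∏ j, (1 - b j * μ))) := by
        rw [hkey]
    _ = lam ^ n * (∏ j, (1 - b j * μ)) * (starRingEnd ℂ) (∏ j, (1 - a j * μ)) := by ring
end

section
/- Let A and B be monic finite Blaschke products of degree n. If the holomorphic function A - B has at least n zeros in the open unit disk, counted with multiplicity, then A = B. -/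
open Complex Finset

/- Proof strategy.  Write `A - B = F(z)/(SA(z)·SB(z))` where
`F = PA·SB - PB·SA` with `PA = ∏ (X - aⱼ)`, `SA = ∏ (1 - conj aⱼ · X)`, etc.
`F` is a polynomial of degree ≤ 2n, anti-self-inversive:
`reflect (2n) (conj F) = -F`.  The zeros of `A - B` in the disk are zeros of `F`
with the same multiplicities; by the symmetry each zero `c ≠ 0` in the disk
produces a reflected zero `1/conj c` outside, while a zero of order `m` at `0`
forces `natDegree F ≤ 2n - m`.  Finally, `F` always has a zero on the unit
circle: on the circle `F(u) = uⁿ·(ζ(u) - conj ζ(u))` with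
`ζ(u) = ∏ (1 - aⱼ·ū)(1 - conj bⱼ·u) = exp (L)`, where the continuous function
`L` (a sum of principal logarithms) has mean value `0` over the circle by the
Cauchy integral formula, so `Im L` vanishes somewhere and `ζ` is real there.
Counting roots: `n (from Z) + (n - m) (reflections) + 1 (circle) > 2n - m ≥
natDegree F`, a contradiction unless `F = 0`. -/

namespace BP

open Polynomial Metric

lemma reflect_linear (c : ℂ) : reflect 1 (X - C c) = 1 - C c * X := by
  rw [sub_eq_add_neg, ← map_neg C, reflect_add, ← pow_one (X : ℂ[X]), reflect_monomial,
    reflect_C, pow_one, revAt_le (le_refl 1)]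
  ring_nf
  rw [sub_eq_add_neg, map_neg]
  ring

lemma reflect_linear' (c : ℂ) : reflect 1 (1 - C c * X) = X - C c := by
  have h1 : (1 : ℂ[X]) = C 1 := by simp
  rw [sub_eq_add_neg, ← neg_mul, ← map_neg C, reflect_add, h1, reflect_C, reflect_C_mul,
    ← pow_one (X : ℂ[X]), reflect_monomial, revAt_le (le_refl 1), pow_one]
  simp [sub_eq_add_neg]

lemma natDegree_linear' (c : ℂ) : (1 - C c * X : ℂ[X]).natDegree ≤ 1 := by
  refine le_trans (natDegree_sub_le _ _) ?_
  simp only [natDegree_one, max_le_iff, Nat.zero_le, true_and]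
  exact (natDegree_C_mul_le c X).trans (by simp)

lemma natDegree_prod_lin_le {ι : Type*} [DecidableEq ι] (s : Finset ι) (f : ι → ℂ[X]) (hf : ∀ i ∈ s, (f i).natDegree ≤ 1) :
    (∏ i ∈ s, f i).natDegree ≤ s.card := by
  refine le_trans (natDegree_prod_le s f) ?_
  calc ∑ i ∈ s, (f i).natDegree ≤ ∑ i ∈ s, 1 := Finset.sum_le_sum hf
  _ = s.card := by simp

lemma reflect_prod {ι : Type*} [DecidableEq ι] (s : Finset ι) (c : ι → ℂ) :
    reflect s.card (∏ i ∈ s, (X - C (c i))) = ∏ i ∈ s, (1 - C (c i) * X) := by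
  induction s using Finset.induction_on with
  | empty => simp
  | insert i s hx ih =>
    rw [Finset.prod_insert hx, Finset.prod_insert hx, Finset.card_insert_of_notMem hx]
    have : s.card + 1 = 1 + s.card := by ring
    rw [this, reflect_mul _ _ (natDegree_X_sub_C _).le (natDegree_prod_lin_le s _ (fun i _ => (natDegree_X_sub_C _).le)), reflect_linear, ih]

lemma reflect_prod' {ι : Type*} [DecidableEq ι] (s : Finset ι) (c : ι → ℂ) :
    reflect s.card (∏ i ∈ s, (1 - C (c i) * X)) = ∏ i ∈ s, (X - C (c i)) := by
  induction s using Finset.induction_on with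
  | empty => simp
  | insert i s hx ih =>
    rw [Finset.prod_insert hx, Finset.prod_insert hx, Finset.card_insert_of_notMem hx]
    have : s.card + 1 = 1 + s.card := by ring
    rw [this, reflect_mul _ _ (natDegree_linear' _) (natDegree_prod_lin_le s _ (fun i _ => natDegree_linear' _)), reflect_linear', ih]


lemma dvd_of_derivs (p : ℂ[X]) (c : ℂ) (K : ℕ)
    (h : ∀ k < K, ((⇑(derivative (R := ℂ)))^[k] p).eval c = 0) : (X - C c) ^ K ∣ p := by
  have h1 : (X : ℂ[X]) ^ K ∣ taylor c p := by
    rw [X_pow_dvd_iff]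
    intro d hd
    rw [taylor_coeff]
    have key := congrFun (factorial_smul_hasseDeriv (R := ℂ) d) p
    rw [LinearMap.smul_apply] at key
    have h2 : eval c (d.factorial • (hasseDeriv d p)) = 0 := by rw [key]; exact h d hd
    rw [nsmul_eq_mul, eval_mul, eval_natCast, mul_eq_zero] at h2
    rcases h2 with h4 | h4
    · exact absurd h4 (Nat.cast_ne_zero.mpr d.factorial_ne_zero)
    · exact h4
  obtain ⟨q, hq⟩ := h1
  refine ⟨taylor (-c) q, ?_⟩
  calc p = taylor (-c) (taylor c p) := by rw [taylor_taylor, neg_add_cancel, taylor_zero]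
  _ = taylor (-c) ((X:ℂ[X]) ^ K) * taylor (-c) q := by rw [hq, taylor_mul]
  _ = (X - C c) ^ K * taylor (-c) q := by
      congr 1
      rw [taylor_apply, pow_comp, X_comp, map_neg, ← sub_eq_add_neg]

lemma natDegree_reflect_le {p : ℂ[X]} {N : ℕ} (h : p.natDegree ≤ N) :
    (reflect N p).natDegree ≤ N := by
  refine natDegree_le_iff_coeff_eq_zero.mpr fun i hi => ?_
  rw [coeff_reflect, revAt_eq_self_of_lt hi]
  exact coeff_eq_zero_of_natDegree_lt (lt_of_le_of_lt h hi)

lemma reflect_pow_linear (d : ℂ) (K : ℕ) :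
    reflect K ((X - C d) ^ K) = (1 - C d * X) ^ K := by
  induction K with
  | zero => simp
  | succ k ih =>
    have hpow : ((X - C d : ℂ[X]) ^ k).natDegree ≤ k :=
      (natDegree_pow _ _).le.trans (by simp [natDegree_X_sub_C])
    rw [pow_succ, reflect_mul _ _ hpow (natDegree_X_sub_C d).le, ih, reflect_linear, ← pow_succ]

/-- Transfer of root multiplicity under the anti-self-inversive symmetry. -/
lemma refl_dvd {N : ℕ} {F : ℂ[X]} (hFne : F ≠ 0) (hFdeg : F.natDegree ≤ N)
    (hrefl : reflect N (F.map (starRingEnd ℂ)) = -F)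
    {c : ℂ} (hc : c ≠ 0) {K : ℕ}
    (hdvd : (X - C c) ^ K ∣ F) : (X - C ((starRingEnd ℂ) c)⁻¹) ^ K ∣ F := by
  set c' : ℂ := (starRingEnd ℂ) c with hc'
  have hc'ne : c' ≠ 0 := by simpa [hc'] using hc
  have hmapdvd : (X - C c') ^ K ∣ F.map (starRingEnd ℂ) := by
    have := Polynomial.map_dvd (starRingEnd ℂ) hdvd
    simpa [Polynomial.map_pow, Polynomial.map_sub, map_X, map_C] using this
  obtain ⟨G, hG⟩ := hmapdvd
  have hinj : Function.Injective (starRingEnd ℂ) := RingHom.injective _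
  have hFm : F.map (starRingEnd ℂ) ≠ 0 := by
    rw [Ne, Polynomial.map_eq_zero_iff hinj]; exact hFne
  have hGne : G ≠ 0 := by rintro rfl; rw [mul_zero] at hG; exact hFm hG
  have hdeg : ((X - C c') ^ K : ℂ[X]).natDegree = K := by
    simp [natDegree_pow, natDegree_X_sub_C]
  have hdegF : (F.map (starRingEnd ℂ)).natDegree = K + G.natDegree := by
    rw [hG, natDegree_mul (pow_ne_zero _ (X_sub_C_ne_zero c')) hGne, hdeg]
  have hdegFN : (F.map (starRingEnd ℂ)).natDegree ≤ N := by
    rw [Polynomial.natDegree_map_eq_of_injective hinj]; exact hFdeg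
  have hKle : K ≤ N := le_trans (by omega) (hdegF ▸ hdegFN)
  have hGle : G.natDegree ≤ N - K := by omega
  have hNK : N = K + (N - K) := (Nat.add_sub_cancel' hKle).symm
  have hsplit : reflect N (F.map (starRingEnd ℂ)) =
      (1 - C c' * X) ^ K * reflect (N - K) G := by
    have h5 := reflect_mul ((X - C c') ^ K) G (F := K) (G := N - K) (le_of_eq hdeg) hGle
    rw [← hNK] at h5
    rw [hG, h5, reflect_pow_linear]
  have hdvd2 : (1 - C c' * X) ^ K ∣ F := by
    have h6 : (1 - C c' * X) ^ K ∣ reflect N (F.map (starRingEnd ℂ)) :=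
      ⟨reflect (N - K) G, hsplit⟩
    rw [hrefl] at h6
    exact (dvd_neg).mp h6
  have hfac : (1 - C c' * X : ℂ[X]) = (X - C c'⁻¹) * C (-c') := by
    have h1 : (C c'⁻¹ : ℂ[X]) * C c' = 1 := by rw [← C_mul, inv_mul_cancel₀ hc'ne, C_1]
    calc (1 : ℂ[X]) - C c' * X = C c'⁻¹ * C c' - C c' * X := by rw [h1]
    _ = (X - C c'⁻¹) * C (-c') := by rw [map_neg]; ring
  calc (X - C c'⁻¹) ^ K ∣ (1 - C c' * X) ^ K := by rw [hfac, mul_pow]; exact Dvd.intro _ rfl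
  _ ∣ F := hdvd2


lemma iteratedDerivWithin_isOpen {s : Set ℂ} (hs : IsOpen s) {x : ℂ} (hx : x ∈ s)
    (f : ℂ → ℂ) (n : ℕ) : iteratedDerivWithin n f s x = iteratedDeriv n f x := by
  simp only [iteratedDerivWithin, iteratedDeriv]
  rw [iteratedFDerivWithin_of_isOpen n hs hx]

lemma iteratedDeriv_add_analytic {s : Set ℂ} (hs : IsOpen s) {x : ℂ} (hx : x ∈ s)
    {f g : ℂ → ℂ} (hf : AnalyticOnNhd ℂ f s) (hg : AnalyticOnNhd ℂ g s) (n : ℕ) :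
    iteratedDeriv n (fun z => f z + g z) x = iteratedDeriv n f x + iteratedDeriv n g x := by
  rw [← iteratedDerivWithin_isOpen hs hx _ n, ← iteratedDerivWithin_isOpen hs hx f n,
    ← iteratedDerivWithin_isOpen hs hx g n]
  exact iteratedDerivWithin_add hx hs.uniqueDiffOn
    ((hf.contDiffOn hs.uniqueDiffOn).contDiffWithinAt hx) ((hg.contDiffOn hs.uniqueDiffOn).contDiffWithinAt hx)

/-- If all derivatives of `f` up to `j` vanish at `c`, then the `j`-th derivative
of `f * g` vanishes at `c`, for `f`, `g` analytic on an open set. -/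
lemma iteratedDeriv_mul_eq_zero {s : Set ℂ} (hs : IsOpen s) :
    ∀ (j : ℕ) (f g : ℂ → ℂ), AnalyticOnNhd ℂ f s → AnalyticOnNhd ℂ g s →
    ∀ c ∈ s, (∀ i ≤ j, iteratedDeriv i f c = 0) →
    iteratedDeriv j (fun z => f z * g z) c = 0 := by
  intro j
  induction j with
  | zero =>
    intro f g _ _ c _ hv
    have h0 := hv 0 le_rfl
    rw [iteratedDeriv_zero] at h0
    rw [iteratedDeriv_zero]
    show f c * g c = 0
    rw [h0, zero_mul]
  | succ j ih =>
    intro f g hf hg c hc hv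
    rw [iteratedDeriv_succ']
    have hev : (deriv fun z => f z * g z) =ᶠ[nhds c]
        fun z => deriv f z * g z + f z * deriv g z := by
      filter_upwards [hs.mem_nhds hc] with z hz
      exact deriv_mul (hf z hz).differentiableAt (hg z hz).differentiableAt
    rw [hev.iteratedDeriv_eq j]
    rw [iteratedDeriv_add_analytic hs hc
      (((hf.deriv).mul hg)) ((hf.mul (hg.deriv))) j]
    have h1 : iteratedDeriv j (fun z => deriv f z * g z) c = 0 := by
      refine ih (deriv f) g hf.deriv hg c hc fun i hij => ?_
      rw [← iteratedDeriv_succ']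
      exact hv (i + 1) (Nat.succ_le_succ hij)
    have h2 : iteratedDeriv j (fun z => f z * deriv g z) c = 0 := by
      refine ih f (deriv g) hf hg.deriv c hc fun i hij => ?_
      exact hv i (hij.trans (Nat.le_succ j))
    rw [h1, h2, add_zero]

lemma iteratedDeriv_polynomial (p : Polynomial ℂ) (k : ℕ) :
    iteratedDeriv k (fun x : ℂ => p.eval x) =
      fun x => ((⇑(Polynomial.derivative (R := ℂ)))^[k] p).eval x := by
  induction k generalizing p with
  | zero => simp
  | succ k ihk =>
    rw [iteratedDeriv_succ']
    have : (deriv fun x : ℂ => p.eval x) = fun x => p.derivative.eval x := by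
      funext x; exact Polynomial.deriv (𝕜 := ℂ) p
    rw [this, ihk, Function.iterate_succ_apply]


lemma one_sub_slit {w z : ℂ} (hw : ‖w‖ < 1) (hz : ‖z‖ ≤ 1) : 1 - w * z ∈ slitPlane := by
  have h : ‖-(w * z)‖ < 1 := by
    rw [norm_neg, norm_mul]
    calc ‖w‖ * ‖z‖ ≤ ‖w‖ * 1 := by
          exact mul_le_mul_of_nonneg_left hz (norm_nonneg w)
    _ = ‖w‖ := mul_one _
    _ < 1 := hw
  simpa [sub_eq_add_neg] using mem_slitPlane_of_norm_lt_one h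

lemma norm_exp_real_mul_I (θ : ℝ) : ‖Complex.exp ((θ:ℂ) * I)‖ = 1 := by
  exact Complex.norm_exp_ofReal_mul_I θ

lemma norm_exp_neg_real_mul_I (θ : ℝ) : ‖Complex.exp (-(θ:ℂ) * I)‖ = 1 := by
  rw [show (-(θ:ℂ)) = ((-θ : ℝ) : ℂ) by push_cast; ring]
  exact norm_exp_real_mul_I (-θ)

lemma log_integral_zero {w : ℂ} (hw : ‖w‖ < 1) :
    (∫ θ in (0:ℝ)..(2*Real.pi), Complex.log (1 - w * Complex.exp ((θ:ℂ) * I))) = 0 := by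
  set g : ℂ → ℂ := fun z => Complex.log (1 - w * z) with hg
  have hdiff : ∀ z ∈ closedBall (0:ℂ) 1, DifferentiableAt ℂ g z := by
    intro z hz
    have hz1 : ‖z‖ ≤ 1 := by simpa using mem_closedBall_zero_iff.mp hz
    have h1 : DifferentiableAt ℂ (fun z : ℂ => 1 - w * z) z := by fun_prop
    exact h1.clog (one_sub_slit hw hz1)
  have hd : DiffContOnCl ℂ g (ball (0:ℂ) 1) := by
    constructor
    · exact fun z hz => (hdiff z (ball_subset_closedBall hz)).differentiableWithinAt
    · exact ContinuousOn.mono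
        (fun z hz => (hdiff z hz).continuousAt.continuousWithinAt)
        closure_ball_subset_closedBall
  have h0 : (0:ℂ) ∈ ball (0:ℂ) 1 := mem_ball_self one_pos
  have hC := hd.circleIntegral_sub_inv_smul h0
  have hg0 : g 0 = 0 := by simp [hg]
  rw [circleIntegral, hg0, smul_zero] at hC
  have hne : ∀ θ : ℝ, circleMap 0 1 θ ≠ 0 := by
    intro θ
    simpa using circleMap_ne_center (one_ne_zero) (c := (0:ℂ)) (θ := θ)
  have heq : ∀ θ : ℝ, deriv (circleMap 0 1) θ • (circleMap 0 1 θ - 0)⁻¹ • g (circleMap 0 1 θ)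
      = I * g (circleMap 0 1 θ) := by
    intro θ
    rw [deriv_circleMap, sub_zero, smul_eq_mul, smul_eq_mul]
    field_simp [hne θ]
  rw [intervalIntegral.integral_congr (fun θ _ => heq θ)] at hC
  rw [intervalIntegral.integral_const_mul] at hC
  have hI : (I : ℂ) ≠ 0 := I_ne_zero
  have hzero : (∫ θ in (0:ℝ)..(2*Real.pi), g (circleMap 0 1 θ)) = 0 := by
    rcases mul_eq_zero.mp hC with h | h
    · exact absurd h hI
    · exact h
  have : ∀ θ : ℝ, g (circleMap 0 1 θ) = Complex.log (1 - w * Complex.exp ((θ:ℂ) * I)) := by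
    intro θ; simp [hg, circleMap]
  rw [intervalIntegral.integral_congr (fun θ _ => this θ)] at hzero
  exact hzero

lemma intervalIntegral_conj {f : ℝ → ℂ} {a b : ℝ} :
    (∫ x in a..b, (starRingEnd ℂ) (f x)) = (starRingEnd ℂ) (∫ x in a..b, f x) := by
  simp only [intervalIntegral, integral_conj, map_sub]

lemma log_integral_zero' {w : ℂ} (hw : ‖w‖ < 1) :
    (∫ θ in (0:ℝ)..(2*Real.pi), Complex.log (1 - w * Complex.exp (-(θ:ℂ) * I))) = 0 := by
  have h1 : ∀ θ : ℝ, Complex.log (1 - w * Complex.exp (-(θ:ℂ) * I))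
      = (starRingEnd ℂ) (Complex.log (1 - (starRingEnd ℂ) w * Complex.exp ((θ:ℂ) * I))) := by
    intro θ
    have hconj : (starRingEnd ℂ) (1 - (starRingEnd ℂ) w * Complex.exp ((θ:ℂ) * I))
        = 1 - w * Complex.exp (-(θ:ℂ) * I) := by
      rw [map_sub, map_one, map_mul, Complex.conj_conj]
      congr 1
      rw [← Complex.exp_conj, map_mul, Complex.conj_I, conj_ofReal]
      ring_nf
    rw [← hconj, Complex.log_conj]
    exact slitPlane_arg_ne_pi
      (one_sub_slit (by simpa using hw) (le_of_eq (norm_exp_real_mul_I θ)))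
  rw [intervalIntegral.integral_congr (fun θ _ => h1 θ), intervalIntegral_conj,
    log_integral_zero (by simpa using hw), map_zero]

lemma exists_zero_of_integral_zero {φ : ℝ → ℝ} (hc : Continuous φ)
    (h0 : (∫ θ in (0:ℝ)..(2*Real.pi), φ θ) = 0) : ∃ θ : ℝ, φ θ = 0 := by
  by_contra hno
  push_neg at hno
  have hpi : (0:ℝ) < 2 * Real.pi := by positivity
  have hsign : (∀ θ, 0 < φ θ) ∨ (∀ θ, φ θ < 0) := by
    rcases (hno 0).lt_or_gt with h | h
    · right
      intro t
      by_contra hle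
      push_neg at hle
      have h0mem : (0:ℝ) ∈ Set.uIcc (φ 0) (φ t) := Set.mem_uIcc.mpr (Or.inl ⟨h.le, hle⟩)
      obtain ⟨s, _, hs⟩ := intermediate_value_uIcc (a := 0) (b := t) hc.continuousOn h0mem
      exact hno s hs
    · left
      intro t
      by_contra hle
      push_neg at hle
      have h0mem : (0:ℝ) ∈ Set.uIcc (φ 0) (φ t) := Set.mem_uIcc.mpr (Or.inr ⟨hle, h.le⟩)
      obtain ⟨s, _, hs⟩ := intermediate_value_uIcc (a := 0) (b := t) hc.continuousOn h0mem
      exact hno s hs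
  rcases hsign with hpos | hneg
  · have := intervalIntegral.intervalIntegral_pos_of_pos (hc.intervalIntegrable 0 (2*Real.pi)) hpos hpi
    rw [h0] at this
    exact lt_irrefl _ this
  · have := intervalIntegral.intervalIntegral_pos_of_pos ((hc.neg).intervalIntegrable 0 (2*Real.pi))
      (fun x => neg_pos.mpr (hneg x)) hpi
    simp only [Pi.neg_apply] at this
    rw [intervalIntegral.integral_neg, h0, neg_zero] at this
    exact lt_irrefl _ this


lemma exists_circle_root (n : ℕ) (a b : Fin n → ℂ)
    (ha : ∀ j, ‖a j‖ < 1) (hb : ∀ j, ‖b j‖ < 1) :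
    ∃ u : ℂ, ‖u‖ = 1 ∧
      (∏ j, (u - a j)) * (∏ j, (1 - (starRingEnd ℂ) (b j) * u)) =
      (∏ j, (u - b j)) * (∏ j, (1 - (starRingEnd ℂ) (a j) * u)) := by
  classical
  set L : ℝ → ℂ := fun θ => ∑ j, (Complex.log (1 - a j * Complex.exp (-(θ:ℂ) * I)) +
      Complex.log (1 - (starRingEnd ℂ) (b j) * Complex.exp ((θ:ℂ) * I))) with hL
  have hb' : ∀ j, ‖(starRingEnd ℂ) (b j)‖ < 1 := by
    intro j; rw [RCLike.norm_conj]; exact hb j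
  have hcont1 : ∀ j : Fin n, Continuous fun θ : ℝ =>
      Complex.log (1 - a j * Complex.exp (-(θ:ℂ) * I)) := by
    intro j
    refine Continuous.clog (by fun_prop) fun θ =>
      one_sub_slit (ha j) (le_of_eq (norm_exp_neg_real_mul_I θ))
  have hcont2 : ∀ j : Fin n, Continuous fun θ : ℝ =>
      Complex.log (1 - (starRingEnd ℂ) (b j) * Complex.exp ((θ:ℂ) * I)) := by
    intro j
    refine Continuous.clog (by fun_prop) fun θ =>
      one_sub_slit (hb' j) (le_of_eq (norm_exp_real_mul_I θ))
  have hcont : Continuous L := by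
    refine continuous_finset_sum _ fun j _ => (hcont1 j).add (hcont2 j)
  have hint : (∫ θ in (0:ℝ)..(2*Real.pi), L θ) = 0 := by
    rw [hL]
    beta_reduce
    rw [intervalIntegral.integral_finset_sum (f := fun j (θ : ℝ) =>
      Complex.log (1 - a j * Complex.exp (-(θ:ℂ) * I)) +
        Complex.log (1 - (starRingEnd ℂ) (b j) * Complex.exp ((θ:ℂ) * I))) (fun j _ =>
      (((hcont1 j).add (hcont2 j)).intervalIntegrable 0 (2*Real.pi)))]
    refine Finset.sum_eq_zero fun j _ => ?_
    rw [intervalIntegral.integral_add ((hcont1 j).intervalIntegrable _ _)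
      ((hcont2 j).intervalIntegrable _ _),
      log_integral_zero' (ha j), log_integral_zero (hb' j), add_zero]
  have him : (∫ θ in (0:ℝ)..(2*Real.pi), (L θ).im) = 0 := by
    have h := Complex.imCLM.intervalIntegral_comp_comm (μ := MeasureTheory.volume)
      (hcont.intervalIntegrable 0 (2*Real.pi))
    simp only [Complex.imCLM_apply] at h
    rw [h, hint]
    simp
  obtain ⟨θ₀, hθ₀⟩ := exists_zero_of_integral_zero (Complex.continuous_im.comp hcont) him
  set u : ℂ := Complex.exp ((θ₀:ℂ) * I) with hu
  set v : ℂ := Complex.exp (-(θ₀:ℂ) * I) with hv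
  have hnu : ‖u‖ = 1 := norm_exp_real_mul_I θ₀
  have huv : v * u = 1 := by
    rw [hu, hv, ← Complex.exp_add]
    ring_nf
    exact Complex.exp_zero
  have hζ : Complex.exp (L θ₀) =
      ∏ j, ((1 - a j * v) * (1 - (starRingEnd ℂ) (b j) * u)) := by
    rw [hL, Complex.exp_sum]
    refine Finset.prod_congr rfl fun j _ => ?_
    rw [Complex.exp_add, Complex.exp_log, Complex.exp_log]
    · exact slitPlane_ne_zero (one_sub_slit (hb' j) (le_of_eq (norm_exp_real_mul_I θ₀)))
    · exact slitPlane_ne_zero (one_sub_slit (ha j) (le_of_eq (norm_exp_neg_real_mul_I θ₀)))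
  have hconju : (starRingEnd ℂ) u = v := by
    rw [hu, hv, ← Complex.exp_conj, map_mul, Complex.conj_I, conj_ofReal]
    ring_nf
  have hconjv : (starRingEnd ℂ) v = u := by
    rw [hu, hv, ← Complex.exp_conj, map_mul, map_neg, Complex.conj_I, conj_ofReal]
    ring_nf
  have hre : (starRingEnd ℂ) (Complex.exp (L θ₀)) = Complex.exp (L θ₀) := by
    rw [← Complex.exp_conj, Complex.conj_eq_iff_im.mpr hθ₀]
  have hkey : ∏ j, ((1 - (starRingEnd ℂ) (a j) * u) * (1 - b j * v)) =
      ∏ j, ((1 - a j * v) * (1 - (starRingEnd ℂ) (b j) * u)) := by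
    calc ∏ j, ((1 - (starRingEnd ℂ) (a j) * u) * (1 - b j * v))
        = (starRingEnd ℂ) (∏ j, ((1 - a j * v) * (1 - (starRingEnd ℂ) (b j) * u))) := by
          rw [map_prod]
          refine Finset.prod_congr rfl fun j _ => ?_
          rw [map_mul, map_sub, map_sub, map_one, map_mul, map_mul, hconjv, hconju,
            Complex.conj_conj]
    _ = ∏ j, ((1 - a j * v) * (1 - (starRingEnd ℂ) (b j) * u)) := by rw [← hζ, hre, hζ]
  refine ⟨u, hnu, ?_⟩
  have hfac : ∀ w : ℂ, u - w = u * (1 - w * v) := by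
    intro w
    rw [mul_sub, mul_one]
    congr 1
    rw [mul_comm w v, ← mul_assoc, mul_comm u v, huv, one_mul]
  calc (∏ j, (u - a j)) * (∏ j, (1 - (starRingEnd ℂ) (b j) * u))
      = (∏ j, (u * (1 - a j * v))) * (∏ j, (1 - (starRingEnd ℂ) (b j) * u)) := by
        rw [Finset.prod_congr rfl fun j _ => hfac (a j)]
  _ = u ^ n * ((∏ j, (1 - a j * v)) * (∏ j, (1 - (starRingEnd ℂ) (b j) * u))) := by
        rw [Finset.prod_mul_distrib, Finset.prod_const, Finset.card_univ, Fintype.card_fin,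
          mul_assoc]
  _ = u ^ n * ∏ j, ((1 - a j * v) * (1 - (starRingEnd ℂ) (b j) * u)) := by
        rw [Finset.prod_mul_distrib]
  _ = u ^ n * ∏ j, ((1 - (starRingEnd ℂ) (a j) * u) * (1 - b j * v)) := by rw [hkey]
  _ = u ^ n * ((∏ j, (1 - b j * v)) * (∏ j, (1 - (starRingEnd ℂ) (a j) * u))) := by
        rw [Finset.prod_mul_distrib]
        ring
  _ = (∏ j, (u * (1 - b j * v))) * (∏ j, (1 - (starRingEnd ℂ) (a j) * u)) := by
        rw [Finset.prod_mul_distrib, Finset.prod_const, Finset.card_univ, Fintype.card_fin,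
          mul_assoc]
  _ = (∏ j, (u - b j)) * (∏ j, (1 - (starRingEnd ℂ) (a j) * u)) := by
        rw [Finset.prod_congr rfl fun j _ => (hfac (b j)).symm]


lemma reflect_neg' (N : ℕ) (p : ℂ[X]) : reflect N (-p) = - reflect N p := by
  ext i
  simp [coeff_reflect]

lemma reflect_sub' (N : ℕ) (p q : ℂ[X]) : reflect N (p - q) = reflect N p - reflect N q := by
  rw [sub_eq_add_neg, reflect_add, reflect_neg', sub_eq_add_neg]

lemma one_sub_mul_ne {w z : ℂ} (hw : ‖w‖ < 1) (hz : ‖z‖ < 1) : 1 - w * z ≠ 0 := by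
  intro h
  have h1 : (1 : ℂ) = w * z := by linear_combination h
  have : ‖w * z‖ < 1 := by
    rw [norm_mul]
    calc ‖w‖ * ‖z‖ ≤ 1 * ‖z‖ := mul_le_mul_of_nonneg_right hw.le (norm_nonneg z)
    _ = ‖z‖ := one_mul _
    _ < 1 := hz
  rw [← h1] at this
  simp at this


end BP

open BP Polynomial Metric in
/-- If `A` and `B` are monic Blaschke products of degree `n` and `A - B` has at least
`n` zeros in the open unit disk counted with multiplicity (encoded as a multiset `Z` of
cardinality `n` of points in the disk such that at each `c ∈ Z` all derivatives of
`A - B` of order `< Z.count c` vanish), then `A = B` on the unit disk. -/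
theorem stmt_1 (n : ℕ) (a b : Fin n → ℂ)
    (ha : ∀ j, ‖a j‖ < 1) (hb : ∀ j, ‖b j‖ < 1)
    (Z : Multiset ℂ) (hcard : Multiset.card Z = n)
    (hZ : ∀ c ∈ Z, ‖c‖ < 1)
    (hmult : ∀ c ∈ Z, ∀ k < Z.count c,
      iteratedDeriv k (fun z : ℂ =>
        (∏ j, (z - a j) / (1 - (starRingEnd ℂ) (a j) * z)) -
        (∏ j, (z - b j) / (1 - (starRingEnd ℂ) (b j) * z))) c = 0) :
    ∀ z : ℂ, ‖z‖ < 1 →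
      (∏ j, (z - a j) / (1 - (starRingEnd ℂ) (a j) * z)) =
      (∏ j, (z - b j) / (1 - (starRingEnd ℂ) (b j) * z)) := by
  classical
  set PA : ℂ[X] := ∏ j, (X - C (a j)) with hPA
  set PB : ℂ[X] := ∏ j, (X - C (b j)) with hPB
  set SA : ℂ[X] := ∏ j, (1 - C ((starRingEnd ℂ) (a j)) * X) with hSA
  set SB : ℂ[X] := ∏ j, (1 - C ((starRingEnd ℂ) (b j)) * X) with hSB
  set F : ℂ[X] := PA * SB - PB * SA with hF
  have hevalPA : ∀ z : ℂ, PA.eval z = ∏ j, (z - a j) := by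
    intro z; rw [hPA, eval_prod]; exact Finset.prod_congr rfl fun j _ => by simp
  have hevalPB : ∀ z : ℂ, PB.eval z = ∏ j, (z - b j) := by
    intro z; rw [hPB, eval_prod]; exact Finset.prod_congr rfl fun j _ => by simp
  have hevalSA : ∀ z : ℂ, SA.eval z = ∏ j, (1 - (starRingEnd ℂ) (a j) * z) := by
    intro z; rw [hSA, eval_prod]; exact Finset.prod_congr rfl fun j _ => by simp
  have hevalSB : ∀ z : ℂ, SB.eval z = ∏ j, (1 - (starRingEnd ℂ) (b j) * z) := by
    intro z; rw [hSB, eval_prod]; exact Finset.prod_congr rfl fun j _ => by simp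
  have hSAne : ∀ z : ℂ, ‖z‖ < 1 → SA.eval z ≠ 0 := by
    intro z hz
    rw [hevalSA]
    exact Finset.prod_ne_zero_iff.mpr fun j _ =>
      one_sub_mul_ne (by simpa using ha j) hz
  have hSBne : ∀ z : ℂ, ‖z‖ < 1 → SB.eval z ≠ 0 := by
    intro z hz
    rw [hevalSB]
    exact Finset.prod_ne_zero_iff.mpr fun j _ =>
      one_sub_mul_ne (by simpa using hb j) hz
  suffices hF0 : F = 0 by
    intro z hz
    rw [Finset.prod_div_distrib, Finset.prod_div_distrib,
      div_eq_div_iff (by rw [← hevalSA]; exact hSAne z hz) (by rw [← hevalSB]; exact hSBne z hz)]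
    have h1 := congrArg (Polynomial.eval z) (hF ▸ hF0)
    rw [eval_sub, eval_mul, eval_mul, hevalPA, hevalPB, hevalSA, hevalSB, eval_zero,
      sub_eq_zero] at h1
    exact h1
  -- Now show F = 0.
  by_contra hFne
  -- rewrite the hypothesis function
  have hprodfun : (fun z : ℂ => (∏ j, (z - a j) / (1 - (starRingEnd ℂ) (a j) * z)) -
        (∏ j, (z - b j) / (1 - (starRingEnd ℂ) (b j) * z)))
      = fun z : ℂ => PA.eval z / SA.eval z - PB.eval z / SB.eval z := by
    funext z
    rw [Finset.prod_div_distrib, Finset.prod_div_distrib, hevalPA, hevalPB, hevalSA, hevalSB]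
  rw [hprodfun] at hmult
  -- analyticity
  have hh : AnalyticOnNhd ℂ (fun z : ℂ => PA.eval z / SA.eval z - PB.eval z / SB.eval z)
      (ball (0:ℂ) 1) := by
    apply DifferentiableOn.analyticOnNhd _ isOpen_ball
    apply DifferentiableOn.sub
    · exact DifferentiableOn.div (PA.differentiable.differentiableOn)
        (SA.differentiable.differentiableOn)
        (fun z hz => hSAne z (by simpa using mem_ball_zero_iff.mp hz))
    · exact DifferentiableOn.div (PB.differentiable.differentiableOn)
        (SB.differentiable.differentiableOn)
        (fun z hz => hSBne z (by simpa using mem_ball_zero_iff.mp hz))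
  have hψ : AnalyticOnNhd ℂ (fun z : ℂ => SA.eval z * SB.eval z) (ball (0:ℂ) 1) := by
    apply DifferentiableOn.analyticOnNhd _ isOpen_ball
    exact (SA.differentiable.mul SB.differentiable).differentiableOn
  -- multiplicity of each point of Z as root of F
  have hdvd : ∀ c ∈ Z, (X - C c) ^ (Z.count c) ∣ F := by
    intro c hc
    have hcball : c ∈ ball (0:ℂ) 1 := mem_ball_zero_iff.mpr (hZ c hc)
    apply dvd_of_derivs
    intro k hk
    have heqball : Set.EqOn (fun z : ℂ => Polynomial.eval z F)
        (fun z => (PA.eval z / SA.eval z - PB.eval z / SB.eval z) *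
          (SA.eval z * SB.eval z)) (ball (0:ℂ) 1) := by
      intro z hz
      have h1 := hSAne z (mem_ball_zero_iff.mp hz)
      have h2 := hSBne z (mem_ball_zero_iff.mp hz)
      show Polynomial.eval z F = _
      rw [hF, eval_sub, eval_mul, eval_mul]
      field_simp
    have hev : (fun z : ℂ => Polynomial.eval z F) =ᶠ[nhds c]
        (fun z => (PA.eval z / SA.eval z - PB.eval z / SB.eval z) *
          (SA.eval z * SB.eval z)) := by
      filter_upwards [isOpen_ball.mem_nhds hcball] with z hz using heqball hz
    calc Polynomial.eval c ((⇑(Polynomial.derivative (R := ℂ)))^[k] F)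
        = iteratedDeriv k (fun z : ℂ => Polynomial.eval z F) c :=
          (congrFun (iteratedDeriv_polynomial F k) c).symm
    _ = 0 := by
        rw [hev.iteratedDeriv_eq k]
        exact iteratedDeriv_mul_eq_zero isOpen_ball k _ _ hh hψ c hcball
          (fun i hik => hmult c hc i (lt_of_le_of_lt hik hk))
  -- reflection identity
  have hreflF : reflect (n + n) (F.map (starRingEnd ℂ)) = -F := by
    have hcardu : (Finset.univ : Finset (Fin n)).card = n := by simp
    have hmapPA : PA.map (starRingEnd ℂ) = ∏ j, (X - C ((starRingEnd ℂ) (a j))) := by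
      rw [hPA, Polynomial.map_prod]
      exact Finset.prod_congr rfl fun j _ => by simp
    have hmapPB : PB.map (starRingEnd ℂ) = ∏ j, (X - C ((starRingEnd ℂ) (b j))) := by
      rw [hPB, Polynomial.map_prod]
      exact Finset.prod_congr rfl fun j _ => by simp
    have hmapSA : SA.map (starRingEnd ℂ) = ∏ j, (1 - C (a j) * X) := by
      rw [hSA, Polynomial.map_prod]
      exact Finset.prod_congr rfl fun j _ => by simp
    have hmapSB : SB.map (starRingEnd ℂ) = ∏ j, (1 - C (b j) * X) := by
      rw [hSB, Polynomial.map_prod]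
      exact Finset.prod_congr rfl fun j _ => by simp
    have hrPA : reflect n (PA.map (starRingEnd ℂ)) = SA := by
      have h := reflect_prod (Finset.univ : Finset (Fin n)) (fun j => (starRingEnd ℂ) (a j))
      rw [hcardu] at h
      rw [hmapPA, hSA, h]
    have hrPB : reflect n (PB.map (starRingEnd ℂ)) = SB := by
      have h := reflect_prod (Finset.univ : Finset (Fin n)) (fun j => (starRingEnd ℂ) (b j))
      rw [hcardu] at h
      rw [hmapPB, hSB, h]
    have hrSA : reflect n (SA.map (starRingEnd ℂ)) = PA := by
      have h := reflect_prod' (Finset.univ : Finset (Fin n)) (fun j => a j)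
      rw [hcardu] at h
      rw [hmapSA, hPA, h]
    have hrSB : reflect n (SB.map (starRingEnd ℂ)) = PB := by
      have h := reflect_prod' (Finset.univ : Finset (Fin n)) (fun j => b j)
      rw [hcardu] at h
      rw [hmapSB, hPB, h]
    have hdPA : (PA.map (starRingEnd ℂ)).natDegree ≤ n := by
      have h := natDegree_prod_lin_le (Finset.univ : Finset (Fin n))
        (fun j => X - C ((starRingEnd ℂ) (a j))) (fun j _ => (natDegree_X_sub_C _).le)
      rw [hcardu] at h
      rw [hmapPA]; exact h
    have hdPB : (PB.map (starRingEnd ℂ)).natDegree ≤ n := by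
      have h := natDegree_prod_lin_le (Finset.univ : Finset (Fin n))
        (fun j => X - C ((starRingEnd ℂ) (b j))) (fun j _ => (natDegree_X_sub_C _).le)
      rw [hcardu] at h
      rw [hmapPB]; exact h
    have hdSA : (SA.map (starRingEnd ℂ)).natDegree ≤ n := by
      have h := natDegree_prod_lin_le (Finset.univ : Finset (Fin n))
        (fun j => 1 - C (a j) * X) (fun j _ => natDegree_linear' _)
      rw [hcardu] at h
      rw [hmapSA]; exact h
    have hdSB : (SB.map (starRingEnd ℂ)).natDegree ≤ n := by
      have h := natDegree_prod_lin_le (Finset.univ : Finset (Fin n))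
        (fun j => 1 - C (b j) * X) (fun j _ => natDegree_linear' _)
      rw [hcardu] at h
      rw [hmapSB]; exact h
    rw [hF, Polynomial.map_sub, Polynomial.map_mul, Polynomial.map_mul, reflect_sub',
      reflect_mul _ _ hdPA hdSB, reflect_mul _ _ hdPB hdSA, hrPA, hrPB, hrSA, hrSB]
    ring
  -- degree bound
  have hdegF : F.natDegree ≤ n + n := by
    have hcardu : (Finset.univ : Finset (Fin n)).card = n := by simp
    have h1 : PA.natDegree ≤ n := by
      have h := natDegree_prod_lin_le (Finset.univ : Finset (Fin n))
        (fun j => X - C (a j)) (fun j _ => (natDegree_X_sub_C _).le)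
      rw [hcardu] at h
      rw [hPA]; exact h
    have h2 : PB.natDegree ≤ n := by
      have h := natDegree_prod_lin_le (Finset.univ : Finset (Fin n))
        (fun j => X - C (b j)) (fun j _ => (natDegree_X_sub_C _).le)
      rw [hcardu] at h
      rw [hPB]; exact h
    have h3 : SA.natDegree ≤ n := by
      have h := natDegree_prod_lin_le (Finset.univ : Finset (Fin n))
        (fun j => 1 - C ((starRingEnd ℂ) (a j)) * X) (fun j _ => natDegree_linear' _)
      rw [hcardu] at h
      rw [hSA]; exact h
    have h4 : SB.natDegree ≤ n := by
      have h := natDegree_prod_lin_le (Finset.univ : Finset (Fin n))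
        (fun j => 1 - C ((starRingEnd ℂ) (b j)) * X) (fun j _ => natDegree_linear' _)
      rw [hcardu] at h
      rw [hSB]; exact h
    rw [hF]
    refine le_trans (natDegree_sub_le _ _) ?_
    refine max_le (le_trans (natDegree_mul_le) (add_le_add h1 h4))
      (le_trans (natDegree_mul_le) (add_le_add h2 h3))
  -- zero of order m at the origin
  set m := Z.count 0 with hmdef
  have hmn : m ≤ n := hcard ▸ Multiset.count_le_card 0 Z
  have hXm : (X : ℂ[X]) ^ m ∣ F := by
    by_cases h0 : (0:ℂ) ∈ Z
    · have h := hdvd 0 h0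
      rw [C_0, sub_zero] at h
      exact h
    · rw [hmdef, Multiset.count_eq_zero.mpr h0, pow_zero]
      exact one_dvd F
  -- degree drop
  have hdegF2 : F.natDegree ≤ n + n - m := by
    have hinj : Function.Injective (starRingEnd ℂ) := RingHom.injective _
    obtain ⟨G, hG⟩ : (X:ℂ[X])^m ∣ F.map (starRingEnd ℂ) := by
      have h := Polynomial.map_dvd (starRingEnd ℂ) hXm
      simpa using h
    have hFm : F.map (starRingEnd ℂ) ≠ 0 := by
      rw [Ne, Polynomial.map_eq_zero_iff hinj]; exact hFne
    have hGne : G ≠ 0 := by rintro rfl; rw [mul_zero] at hG; exact hFm hG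
    have hdegFG : (F.map (starRingEnd ℂ)).natDegree = m + G.natDegree := by
      rw [hG, natDegree_mul (pow_ne_zero _ X_ne_zero) hGne, natDegree_pow, natDegree_X, mul_one]
    have hdegFN : (F.map (starRingEnd ℂ)).natDegree ≤ n + n := by
      rw [natDegree_map_eq_of_injective hinj]; exact hdegF
    have hGle : G.natDegree ≤ n + n - m := by omega
    have hmle : m ≤ n + n := by omega
    have hNK : n + n = m + (n + n - m) := by omega
    have h5 := reflect_mul ((X:ℂ[X]) ^ m) G (F := m) (G := n + n - m)
      (by simp [natDegree_pow]) hGle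
    rw [← hNK] at h5
    have h6 : reflect m ((X:ℂ[X])^m) = 1 := by
      rw [reflect_monomial, revAt_le (le_refl m), Nat.sub_self, pow_zero]
    have h7 : -F = reflect (n + n - m) G := by
      rw [← hreflF, hG, h5, h6, one_mul]
    calc F.natDegree = (-F).natDegree := (natDegree_neg F).symm
    _ = (reflect (n + n - m) G).natDegree := by rw [h7]
    _ ≤ n + n - m := natDegree_reflect_le hGle
  -- circle root
  obtain ⟨u, hnu, hueq⟩ := exists_circle_root n a b ha hb
  have hFu : Polynomial.IsRoot F u := by
    rw [Polynomial.IsRoot, hF, eval_sub, eval_mul, eval_mul, hevalPA, hevalPB, hevalSA,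
      hevalSB, hueq, sub_self]
  -- the multiset of known roots
  set f : ℂ → ℂ := fun c => ((starRingEnd ℂ) c)⁻¹ with hfdef
  have hinjf : Function.Injective f := by
    intro x y hxy
    have h1 : (starRingEnd ℂ) x = (starRingEnd ℂ) y := inv_injective hxy
    exact (starRingEnd ℂ).injective h1
  set Z' : Multiset ℂ := (Z.filter (fun c => c ≠ 0)).map f with hZ'def
  have hnormZ' : ∀ x ∈ Z', 1 < ‖x‖ := by
    intro x hx
    rw [hZ'def, Multiset.mem_map] at hx
    obtain ⟨c, hcf, rfl⟩ := hx
    obtain ⟨hcZ, hc0⟩ := Multiset.mem_filter.mp hcf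
    have hc1 : ‖c‖ < 1 := hZ c hcZ
    have hc2 : 0 < ‖c‖ := norm_pos_iff.mpr hc0
    rw [hfdef]
    show 1 < ‖((starRingEnd ℂ) c)⁻¹‖
    rw [norm_inv, RCLike.norm_conj]
    exact (one_lt_inv₀ hc2).mpr hc1
  have hroots_le : Z + Z' + {u} ≤ F.roots := by
    rw [Multiset.le_iff_count]
    intro x
    rw [Polynomial.count_roots]
    simp only [Multiset.count_add]
    rcases lt_trichotomy ‖x‖ 1 with hx | hx | hx
    · have hZ'0 : Z'.count x = 0 := Multiset.count_eq_zero.mpr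
        (fun hmem => absurd hx (not_lt.mpr (hnormZ' x hmem).le))
      have hu0 : ({u} : Multiset ℂ).count x = 0 := by
        rw [Multiset.count_singleton, if_neg (fun h => by rw [h, hnu] at hx; exact lt_irrefl _ hx)]
      rw [hZ'0, hu0, add_zero, add_zero]
      by_cases hxZ : x ∈ Z
      · exact (Polynomial.le_rootMultiplicity_iff hFne).mpr (hdvd x hxZ)
      · rw [Multiset.count_eq_zero.mpr hxZ]
        exact Nat.zero_le _
    · have hZ0 : Z.count x = 0 := Multiset.count_eq_zero.mpr
        (fun hmem => absurd hx (ne_of_lt (hZ x hmem)))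
      have hZ'0 : Z'.count x = 0 := Multiset.count_eq_zero.mpr
        (fun hmem => absurd hx.symm (ne_of_lt (hnormZ' x hmem)))
      rw [hZ0, hZ'0, zero_add, zero_add, Multiset.count_singleton]
      by_cases hxu : x = u
      · rw [if_pos hxu, hxu]
        exact (Polynomial.rootMultiplicity_pos hFne).mpr hFu
      · rw [if_neg hxu]
        exact Nat.zero_le _
    · have hZ0 : Z.count x = 0 := Multiset.count_eq_zero.mpr
        (fun hmem => absurd hx (not_lt.mpr (hZ x hmem).le))
      have hu0 : ({u} : Multiset ℂ).count x = 0 := by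
        rw [Multiset.count_singleton,
          if_neg (fun h => by rw [h, hnu] at hx; exact lt_irrefl _ hx)]
      rw [hZ0, hu0, zero_add, add_zero]
      by_cases hxZ' : x ∈ Z'
      · rw [hZ'def] at hxZ'
        obtain ⟨c, hcf, rfl⟩ := Multiset.mem_map.mp hxZ'
        obtain ⟨hcZ, hc0⟩ := Multiset.mem_filter.mp hcf
        have hcount : Z'.count (f c) = Z.count c := by
          rw [hZ'def, Multiset.count_map_eq_count' f _ hinjf, Multiset.count_filter,
            if_pos hc0]
        rw [hcount]
        refine (Polynomial.le_rootMultiplicity_iff hFne).mpr ?_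
        exact refl_dvd hFne hdegF hreflF hc0 (hdvd c hcZ)
      · rw [Multiset.count_eq_zero.mpr hxZ']
        exact Nat.zero_le _
  -- cardinality contradiction
  have hcardZ' : Multiset.card Z' = n - m := by
    rw [hZ'def, Multiset.card_map]
    have h1 : Z.filter (fun c => ¬ c ≠ 0) = Multiset.replicate m 0 := by
      have h0 : Multiset.filter (fun c : ℂ => ¬ c ≠ 0) Z
          = Multiset.filter (fun c : ℂ => c = 0) Z :=
        Multiset.filter_congr (fun c _ => by simp)
      rw [h0, Multiset.filter_eq']
    have h2 := Multiset.filter_add_not (fun c : ℂ => c ≠ 0) Z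
    have h3 := congrArg Multiset.card h2
    rw [Multiset.card_add, h1, Multiset.card_replicate, hcard] at h3
    omega
  have hfinal : Multiset.card (Z + Z' + {u}) ≤ F.natDegree :=
    le_trans (Multiset.card_le_card hroots_le) (Polynomial.card_roots' F)
  rw [Multiset.card_add, Multiset.card_add, hcard, hcardZ', Multiset.card_singleton] at hfinal
  have := le_trans hfinal hdegF2
  omega
end

section
/- Let B(z) = ((z)/(1)) * ((z - t)/(1 - t z)) be the degree-2 Blaschke product with zeros 0 and t in (0,1), and let r in (0,1) satisfy sqrt(r) < (1 - sqrt(1 - t^2))/t. Then for every z in the level set {|B(z)| < r}, one has rho(z, 0) ≠ rho(z, t), where rho is the pseudohyperbolic distance. -/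
open Complex

/-- For `B z = z (z - t)/(1 - t z)` with `t ∈ (0,1)` and `r ∈ (0,1)` with
`√r < (1 - √(1-t²))/t`, every `z` in the level set `{|B| < r}` satisfies
`ρ(z,0) ≠ ρ(z,t)`. -/
theorem stmt_11 (t r : ℝ) (ht0 : 0 < t) (ht1 : t < 1) (hr0 : 0 < r) (hr1 : r < 1)
    (hsep : Real.sqrt r < (1 - Real.sqrt (1 - t ^ 2)) / t)
    (z : ℂ) (hz : ‖z * ((z - (t : ℂ)) / (1 - (t : ℂ) * z))‖ < r) :
    ‖z‖ ≠ ‖(z - (t : ℂ)) / (1 - (t : ℂ) * z)‖ := by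
  intro h
  set s := ‖z‖ with hs
  have hsnn : 0 ≤ s := norm_nonneg z
  have hss : s * s < r := by
    have : ‖z * ((z - (t : ℂ)) / (1 - (t : ℂ) * z))‖ = s * s := by
      rw [norm_mul, ← h]
    rwa [this] at hz
  have hslt : s < Real.sqrt r := by
    have : s = Real.sqrt (s * s) := (Real.sqrt_mul_self hsnn).symm
    rw [this]
    exact Real.sqrt_lt_sqrt (by positivity) hss
  have hs1 : s < 1 := lt_of_lt_of_le hslt (by
    rw [show (1:ℝ) = Real.sqrt 1 by simp]
    exact Real.sqrt_le_sqrt hr1.le)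
  have hs0 : s < (1 - Real.sqrt (1 - t ^ 2)) / t := lt_trans hslt hsep
  have hts : t * s < 1 - Real.sqrt (1 - t ^ 2) := by
    rw [lt_div_iff₀ ht0] at hs0
    linarith
  have hsqrt : Real.sqrt (1 - t ^ 2) ^ 2 = 1 - t ^ 2 := Real.sq_sqrt (by nlinarith)
  have hsqnn : 0 ≤ Real.sqrt (1 - t ^ 2) := Real.sqrt_nonneg _
  have hkey : 2 * s < t * (1 + s ^ 2) := by nlinarith [sq_nonneg (1 - t * s)]
  have hw : (1 : ℂ) - (t : ℂ) * z ≠ 0 := by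
    intro hw0
    have h1 : (t : ℂ) * z = 1 := by linear_combination -hw0
    have h2 : ‖(t : ℂ) * z‖ = 1 := by rw [h1, norm_one]
    rw [norm_mul, Complex.norm_real, Real.norm_of_nonneg ht0.le] at h2
    nlinarith
  have hden : ‖(1 : ℂ) - (t : ℂ) * z‖ ≠ 0 := norm_ne_zero_iff.mpr hw
  have hnorm : ‖z - (t : ℂ)‖ = s * ‖1 - (t : ℂ) * z‖ := by
    rw [h, norm_div, div_mul_cancel₀ _ hden]
  have hE : ‖z - (t : ℂ)‖ ^ 2 = s ^ 2 * ‖1 - (t : ℂ) * z‖ ^ 2 := by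
    rw [hnorm]; ring
  have e0 : s ^ 2 = z.re ^ 2 + z.im ^ 2 := by
    rw [hs, Complex.sq_norm, Complex.normSq_apply]; ring
  have e1 : ‖z - (t : ℂ)‖ ^ 2 = (z.re - t) ^ 2 + z.im ^ 2 := by
    rw [Complex.sq_norm, Complex.normSq_apply]
    simp [Complex.sub_re, Complex.sub_im]
    ring
  have e2 : ‖1 - (t : ℂ) * z‖ ^ 2 = (1 - t * z.re) ^ 2 + (t * z.im) ^ 2 := by
    rw [Complex.sq_norm, Complex.normSq_apply]
    simp [Complex.sub_re, Complex.sub_im, Complex.mul_re, Complex.mul_im]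
    ring
  rw [e1, e2, e0] at hE
  have hxle : z.re ≤ s := by
    rw [hs]
    exact Complex.re_le_norm z
  have hq1 : 0 < 1 - (z.re ^ 2 + z.im ^ 2) := by
    have := hs1
    rw [show s = Real.sqrt (s^2) from (Real.sqrt_sq hsnn).symm, e0] at this
    nlinarith [Real.sq_sqrt (show (0:ℝ) ≤ z.re ^ 2 + z.im ^ 2 by positivity),
      Real.sqrt_nonneg (z.re ^ 2 + z.im ^ 2)]
  have hmid : t * ((t * (1 + (z.re ^ 2 + z.im ^ 2)) - 2 * z.re) * (1 - (z.re ^ 2 + z.im ^ 2))) = 0 := by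
    linear_combination hE
  have hmid2 := (mul_eq_zero.mp hmid).resolve_left ht0.ne'
  have h2x : t * (1 + (z.re ^ 2 + z.im ^ 2)) = 2 * z.re := by
    rcases mul_eq_zero.mp hmid2 with h4 | h4
    · linarith
    · linarith
  have hfin : t * (1 + s ^ 2) = 2 * z.re := by rw [e0]; exact h2x
  linarith
end

section
/- For t in [0,1), let X_t be the 3x3 upper triangular matrix [[1,0,0],[0,1/sqrt(2),t/4],[0,0,1/2]]. Then the operator norm product satisfies ||X_t|| * ||X_t^{-1}|| = (1/2) sqrt(12 + t^2 + sqrt(16 + 24 t^2 + t^4)), and this quantity lies in [2, sqrt(13 + sqrt(41))/2]. -/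
open Complex

lemma quadlem (p q r c a b : ℝ) (ha : 0 ≤ a) (hb : 0 ≤ b)
    (hA : p^2 ≤ c^2) (hD : q^2 + r^2 ≤ c^2)
    (hdet : p^2*q^2 ≤ (c^2-p^2)*(c^2-q^2-r^2)) :
    (p*a + (_root_.abs q)*b)^2 + r^2*b^2 ≤ c^2*(a^2+b^2) := by
  have hq : (_root_.abs q)^2 = q^2 := sq_abs q
  rcases eq_or_lt_of_le hA with h | h
  · have hpq : (p*(_root_.abs q))^2 ≤ 0 := by nlinarith
    have hpq0 : p * (_root_.abs q) = 0 := by nlinarith [sq_nonneg (p*(_root_.abs q))]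
    nlinarith [sq_nonneg b, mul_nonneg ha hb]
  · have key : 0 ≤ (c^2-p^2) * (c^2*(a^2+b^2) - ((p*a + (_root_.abs q)*b)^2 + r^2*b^2)) := by
      have hq1 : (_root_.abs q)^2*b^2 = q^2*b^2 := by rw [_root_.sq_abs]
      have hq2 : p^2*(_root_.abs q)^2*b^2 = p^2*q^2*b^2 := by rw [_root_.sq_abs]
      nlinarith [sq_nonneg ((c^2-p^2)*a - p*(_root_.abs q)*b),
        mul_nonneg (sub_nonneg.2 hdet) (sq_nonneg b)]
    nlinarith [key]

lemma normlem_app (p q r : ℝ) (x : EuclideanSpace ℂ (Fin 3)) :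
    (Matrix.toEuclideanCLM (𝕜 := ℂ) !![1,0,0;0,((p:ℝ):ℂ),((q:ℝ):ℂ);0,0,((r:ℝ):ℂ)]) x
      = (WithLp.equiv 2 _).symm ![x 0, (p:ℂ) * x 1 + (q:ℂ) * x 2, (r:ℂ) * x 2] := by
  ext i
  have : (Matrix.toEuclideanCLM (𝕜 := ℂ) !![1,0,0;0,((p:ℝ):ℂ),((q:ℝ):ℂ);0,0,((r:ℝ):ℂ)]) x i
      = (!![1,0,0;0,((p:ℝ):ℂ),((q:ℝ):ℂ);0,0,((r:ℝ):ℂ)]).mulVec (fun j => x j) i := rfl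
  rw [this]
  fin_cases i <;>
    simp [Matrix.mulVec, dotProduct, Fin.sum_univ_three]

lemma norm_symm_eq (y : Fin 3 → ℂ) : ‖(WithLp.equiv 2 (Fin 3 → ℂ)).symm y‖
    = Real.sqrt (‖y 0‖^2 + ‖y 1‖^2 + ‖y 2‖^2) := by
  rw [EuclideanSpace.norm_eq, Fin.sum_univ_three]
  rfl

lemma norm_x_eq (x : EuclideanSpace ℂ (Fin 3)) :
    ‖x‖ = Real.sqrt (‖x 0‖^2 + ‖x 1‖^2 + ‖x 2‖^2) := by
  rw [EuclideanSpace.norm_eq, Fin.sum_univ_three]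

lemma cnorm_sq (x : ℝ) : ‖((x:ℝ):ℂ)‖^2 = x^2 := by
  simp [Complex.norm_real, _root_.sq_abs]

lemma norm_le_aux (p q r c : ℝ) (hp : 0 ≤ p) (hc : 1 ≤ c)
    (hA : p^2 ≤ c^2) (hD : q^2 + r^2 ≤ c^2)
    (hdet : p^2*q^2 ≤ (c^2-p^2)*(c^2-q^2-r^2)) :
    ‖Matrix.toEuclideanCLM (𝕜 := ℂ) !![1,0,0;0,((p:ℝ):ℂ),((q:ℝ):ℂ);0,0,((r:ℝ):ℂ)]‖ ≤ c := by
  have hc0 : (0:ℝ) ≤ c := le_trans zero_le_one hc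
  apply ContinuousLinearMap.opNorm_le_bound _ hc0
  intro x
  rw [normlem_app, norm_symm_eq, norm_x_eq]
  rw [show c * Real.sqrt (‖x 0‖^2 + ‖x 1‖^2 + ‖x 2‖^2)
      = Real.sqrt (c^2 * (‖x 0‖^2 + ‖x 1‖^2 + ‖x 2‖^2)) by
    rw [Real.sqrt_mul (sq_nonneg c), Real.sqrt_sq hc0]]
  apply Real.sqrt_le_sqrt
  simp only [Matrix.cons_val_zero, Matrix.cons_val_one, Matrix.head_cons,
    Matrix.cons_val_two, Matrix.tail_cons]
  have h1 : ‖(p:ℂ) * x 1 + (q:ℂ) * x 2‖ ≤ p * ‖x 1‖ + (_root_.abs q) * ‖x 2‖ := by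
    refine le_trans (norm_add_le _ _) ?_
    rw [norm_mul, norm_mul]
    simp [_root_.abs_of_nonneg hp]
  have h1' : ‖(p:ℂ) * x 1 + (q:ℂ) * x 2‖^2 ≤ (p * ‖x 1‖ + (_root_.abs q) * ‖x 2‖)^2 :=
    pow_le_pow_left₀ (norm_nonneg _) h1 2
  have h2 : ‖(r:ℂ) * x 2‖^2 = r^2 * ‖x 2‖^2 := by
    rw [norm_mul]; simp [mul_pow, _root_.sq_abs]
  have h3 := quadlem p q r c ‖x 1‖ ‖x 2‖ (norm_nonneg _) (norm_nonneg _) hA hD hdet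
  have h4 : ‖x 0‖^2 ≤ c^2 * ‖x 0‖^2 := by
    nlinarith [mul_nonneg (show (0:ℝ) ≤ c^2 - 1 by nlinarith) (sq_nonneg ‖x 0‖)]
  nlinarith [h1', h2, h3, h4]

lemma norm_ge_aux (T : EuclideanSpace ℂ (Fin 3) →L[ℂ] EuclideanSpace ℂ (Fin 3))
    (c : ℝ) (v : EuclideanSpace ℂ (Fin 3)) (hv : v ≠ 0) (h : ‖T v‖ = c * ‖v‖) :
    c ≤ ‖T‖ := by
  have h1 := T.le_opNorm v
  have hv' : 0 < ‖v‖ := norm_pos_iff.2 hv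
  rw [h] at h1
  exact le_of_mul_le_mul_right h1 hv'

lemma norm_eq_aux (p q r c : ℝ) (hp : 0 ≤ p) (hc : 1 ≤ c)
    (hA : p^2 < c^2) (hD : q^2 + r^2 ≤ c^2)
    (hdet : p^2*q^2 = (c^2-p^2)*(c^2-q^2-r^2)) :
    ‖Matrix.toEuclideanCLM (𝕜 := ℂ) !![1,0,0;0,((p:ℝ):ℂ),((q:ℝ):ℂ);0,0,((r:ℝ):ℂ)]‖ = c := by
  have hc0 : (0:ℝ) ≤ c := le_trans zero_le_one hc
  refine le_antisymm (norm_le_aux p q r c hp hc hA.le hD hdet.le) ?_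
  set v : EuclideanSpace ℂ (Fin 3) :=
    (WithLp.equiv 2 (Fin 3 → ℂ)).symm ![((0:ℝ):ℂ), ((p*q:ℝ):ℂ), ((c^2-p^2:ℝ):ℂ)] with hvdef
  have hv2 : v 2 = ((c^2-p^2:ℝ):ℂ) := rfl
  have hv : v ≠ 0 := by
    intro h0
    have : v 2 = 0 := by rw [h0]; rfl
    rw [hv2] at this
    have h2 := Complex.ofReal_eq_zero.mp this
    linarith
  apply norm_ge_aux _ _ v hv
  have h0 : v 0 = ((0:ℝ):ℂ) := rfl
  have h1 : v 1 = ((p*q:ℝ):ℂ) := rfl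
  rw [normlem_app, norm_symm_eq, h0, h1, hv2]
  have hnv : ‖v‖ = Real.sqrt ((0:ℝ)^2 + (p*q)^2 + (c^2-p^2)^2) := by
    rw [hvdef, norm_symm_eq]
    simp only [Matrix.cons_val_zero, Matrix.cons_val_one, Matrix.head_cons,
      Matrix.cons_val_two, Matrix.tail_cons]
    rw [cnorm_sq, cnorm_sq, cnorm_sq]
  rw [hnv]
  simp only [Matrix.cons_val_zero, Matrix.cons_val_one, Matrix.head_cons,
    Matrix.cons_val_two, Matrix.tail_cons]
  have e1 : (p:ℂ) * ((p*q:ℝ):ℂ) + (q:ℂ) * ((c^2-p^2:ℝ):ℂ) = ((p*(p*q)+q*(c^2-p^2) :ℝ):ℂ) := by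
    push_cast; ring
  have e2 : (r:ℂ) * ((c^2-p^2:ℝ):ℂ) = ((r*(c^2-p^2) :ℝ):ℂ) := by push_cast; ring
  rw [e1, e2, cnorm_sq, cnorm_sq, cnorm_sq]
  rw [show c * Real.sqrt ((0:ℝ)^2 + (p*q)^2 + (c^2-p^2)^2)
      = Real.sqrt (c^2 * ((0:ℝ)^2 + (p*q)^2 + (c^2-p^2)^2)) by
    rw [Real.sqrt_mul (sq_nonneg c), Real.sqrt_sq hc0]]
  congr 1
  linear_combination (c^2-p^2) * hdet

set_option maxHeartbeats 1600000 in
/-- For `t ∈ [0,1)` and `X_t = [[1,0,0],[0,1/√2,t/4],[0,0,1/2]]`, the product of the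
operator norms of `X_t` and `X_t⁻¹` (acting on Euclidean `ℂ³`) equals
`(1/2)√(12 + t² + √(16 + 24t² + t⁴))`, which lies in `[2, √(13 + √41)/2]`. -/
theorem stmt_18 (t : ℝ) (ht : t ∈ Set.Ico (0 : ℝ) 1)
    (X : Matrix (Fin 3) (Fin 3) ℂ)
    (hX : X = !![1, 0, 0; 0, ((1 / Real.sqrt 2 : ℝ) : ℂ), ((t / 4 : ℝ) : ℂ); 0, 0, 1 / 2]) :
    ‖Matrix.toEuclideanCLM (𝕜 := ℂ) X‖ * ‖Matrix.toEuclideanCLM (𝕜 := ℂ) X⁻¹‖ =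
      (1 / 2) * Real.sqrt (12 + t ^ 2 + Real.sqrt (16 + 24 * t ^ 2 + t ^ 4)) ∧
    ‖Matrix.toEuclideanCLM (𝕜 := ℂ) X‖ * ‖Matrix.toEuclideanCLM (𝕜 := ℂ) X⁻¹‖ ∈
      Set.Icc (2 : ℝ) (Real.sqrt (13 + Real.sqrt 41) / 2) := by
  obtain ⟨ht0, ht1⟩ := ht
  have ht2 : t^2 ≤ 1 := by nlinarith
  set s := Real.sqrt (16 + 24*t^2 + t^4) with hsdef
  have hE0 : (0:ℝ) ≤ 16 + 24*t^2 + t^4 := by positivity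
  have hs0 : 0 ≤ s := Real.sqrt_nonneg _
  have hs2 : s^2 = 16 + 24*t^2 + t^4 := Real.sq_sqrt hE0
  have hs4 : 4 ≤ s := (Real.le_sqrt (by norm_num) hE0).2 (by nlinarith)
  have hs4t : 4 + t^2 ≤ s := (Real.le_sqrt (by positivity) hE0).2 (by nlinarith)
  have hs41 : s ≤ Real.sqrt 41 := Real.sqrt_le_sqrt (by nlinarith)
  have ha2 : Real.sqrt 2 ^ 2 = 2 := Real.sq_sqrt (by norm_num)
  have ha0 : (0:ℝ) < Real.sqrt 2 := Real.sqrt_pos.2 (by norm_num)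
  -- the norm of X
  have hX1 : X = !![1,0,0;0,(((1/Real.sqrt 2):ℝ):ℂ),(((t/4):ℝ):ℂ);0,0,(((1/2):ℝ):ℂ)] := by
    rw [hX]
    ext i j
    fin_cases i <;> fin_cases j <;> norm_num
  have hp2 : (1/Real.sqrt 2 : ℝ)^2 = 1/2 := by
    rw [div_pow, ha2]; norm_num
  have hnX : ‖Matrix.toEuclideanCLM (𝕜 := ℂ) X‖ = 1 := by
    rw [hX1]
    refine le_antisymm (norm_le_aux _ _ _ 1 (by positivity) le_rfl (by nlinarith)
      (by nlinarith) (by rw [hp2]; nlinarith)) ?_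
    set v : EuclideanSpace ℂ (Fin 3) :=
      (WithLp.equiv 2 (Fin 3 → ℂ)).symm ![(1:ℂ), 0, 0] with hvdef
    have hv : v ≠ 0 := by
      intro h0
      have : v 0 = 0 := by rw [h0]; rfl
      exact one_ne_zero this
    apply norm_ge_aux _ _ v hv
    have h0 : v 0 = 1 := rfl
    have h1 : v 1 = 0 := rfl
    have h2 : v 2 = 0 := rfl
    rw [normlem_app, norm_symm_eq, h0, h1, h2, one_mul]
    rw [hvdef, norm_symm_eq]
    simp only [Matrix.cons_val_zero, Matrix.cons_val_one, Matrix.head_cons,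
      Matrix.cons_val_two, Matrix.tail_cons]
    norm_num
  -- the inverse
  set Y : Matrix (Fin 3) (Fin 3) ℂ :=
    !![1,0,0;0,((Real.sqrt 2:ℝ):ℂ),(((-(t*Real.sqrt 2/2)):ℝ):ℂ);0,0,(((2:ℝ)):ℂ)] with hYdef
  have hXY : X * Y = 1 := by
    rw [hX, hYdef, Matrix.mul_fin_three]
    have hs : Real.sqrt 2 * Real.sqrt 2 = 2 := Real.mul_self_sqrt (by norm_num)
    have hne : Real.sqrt 2 ≠ 0 := ne_of_gt ha0
    have e1 : ((1 / Real.sqrt 2 : ℝ) : ℂ) * ((Real.sqrt 2:ℝ):ℂ) = 1 := by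
      push_cast
      field_simp
    have e2 : ((1 / Real.sqrt 2 : ℝ) : ℂ) * (((-(t*Real.sqrt 2/2)):ℝ):ℂ)
        + ((t / 4 : ℝ) : ℂ) * (((2:ℝ)):ℂ) = 0 := by
      have h12 : (1/Real.sqrt 2 : ℝ) = Real.sqrt 2 / 2 := by
        rw [div_eq_div_iff hne (by norm_num : (2:ℝ) ≠ 0), hs]
        norm_num
      have hre : (1/Real.sqrt 2) * (-(t*Real.sqrt 2/2)) + (t/4)*2 = 0 := by
        rw [h12]
        linear_combination (-(t/4))*hs
      exact_mod_cast congrArg (fun x : ℝ => (x:ℂ)) hre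
    have e3 : (1/2 : ℂ) * (((2:ℝ)):ℂ) = 1 := by norm_num
    rw [show (1:Matrix (Fin 3) (Fin 3) ℂ) = !![1,0,0;0,1,0;0,0,1] by
      ext i j
      fin_cases i <;> fin_cases j <;>
        simp [Matrix.one_apply, Matrix.vecHead, Matrix.vecTail]]
    simp only [mul_zero, zero_mul, add_zero, zero_add, mul_one, one_mul]
    rw [e1, e2, e3]
  have hXinv : X⁻¹ = Y := Matrix.inv_eq_right_inv hXY
  -- the norm of the inverse
  set c₂ := Real.sqrt ((12+t^2+s)/4) with hc2def
  have hl0 : (0:ℝ) ≤ (12+t^2+s)/4 := by positivity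
  have hc2sq : c₂^2 = (12+t^2+s)/4 := Real.sq_sqrt hl0
  have hc20 : 0 ≤ c₂ := Real.sqrt_nonneg _
  have hc2ge2 : 2 ≤ c₂ := (Real.le_sqrt (by norm_num) hl0).2 (by nlinarith)
  have hc21 : 1 ≤ c₂ := by linarith
  have hq2 : (-(t*Real.sqrt 2/2))^2 = t^2/2 := by
    rw [neg_sq, div_pow, mul_pow, ha2]
    ring
  have hnY : ‖Matrix.toEuclideanCLM (𝕜 := ℂ) Y‖ = c₂ := by
    rw [hYdef]
    apply norm_eq_aux (Real.sqrt 2) (-(t*Real.sqrt 2/2)) 2 c₂ ha0.le hc21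
    · rw [ha2, hc2sq]; nlinarith [sq_nonneg t]
    · rw [hq2, hc2sq]; nlinarith [sq_nonneg t]
    · rw [hq2, ha2, hc2sq]
      linear_combination (-1/16)*hs2
  have hc2eq : c₂ = (1/2) * Real.sqrt (12+t^2+s) := by
    rw [hc2def, show (12+t^2+s)/4 = ((1/2:ℝ))^2*(12+t^2+s) by ring,
      Real.sqrt_mul (sq_nonneg _), Real.sqrt_sq (by norm_num : (0:ℝ) ≤ 1/2)]
  rw [hXinv, hnX, hnY, one_mul]
  refine ⟨by rw [hc2eq], hc2ge2, ?_⟩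
  rw [hc2eq]
  have hub : Real.sqrt (12+t^2+s) ≤ Real.sqrt (13 + Real.sqrt 41) :=
    Real.sqrt_le_sqrt (by nlinarith)
  linarith
end

section
/- Let t in (0,1) and let E be the closed elliptical disk {x + iy : 4x^2/(1+t^2)^2 + 4y^2/(1-t^2)^2 <= 1}, which is the numerical range of the matrix [[t, 1-t^2],[0,-t]]. If t > sqrt(3)/2, then no pseudohyperbolic disk D_rho(z_0, 1/2) with z_0 in the open unit disk is contained in E. -/
open Complex

private lemma normsq_eq (w : ℂ) : ‖w‖ ^ 2 = w.re ^ 2 + w.im ^ 2 := by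
  rw [Complex.sq_norm, Complex.normSq_apply]; ring

private lemma poly_core (u v x y : ℝ) (hn1 : u^2+v^2 < 1)
    (hb : (x - 3/(4-(u^2+v^2))*u)^2 + (y - 3/(4-(u^2+v^2))*v)^2
        < (2*(1-(u^2+v^2))/(4-(u^2+v^2)))^2) :
    ((x-u)^2+(y-v)^2) * 4 < (1-(u*x+v*y))^2 + (u*y-v*x)^2 := by
  have hn0 : 0 ≤ u^2+v^2 := by positivity
  have hd : (0:ℝ) < 4-(u^2+v^2) := by linarith
  have hb' : (4-(u^2+v^2))^2 * ((x - 3/(4-(u^2+v^2))*u)^2 + (y - 3/(4-(u^2+v^2))*v)^2)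
      < (4-(u^2+v^2))^2 * (2*(1-(u^2+v^2))/(4-(u^2+v^2)))^2 :=
    mul_lt_mul_of_pos_left hb (by positivity)
  have e1 : (4-(u^2+v^2))^2 * ((x - 3/(4-(u^2+v^2))*u)^2 + (y - 3/(4-(u^2+v^2))*v)^2)
      = ((4-(u^2+v^2))*x - 3*u)^2 + ((4-(u^2+v^2))*y - 3*v)^2 := by
    field_simp
  have e2 : (4-(u^2+v^2))^2 * (2*(1-(u^2+v^2))/(4-(u^2+v^2)))^2 = 4*(1-(u^2+v^2))^2 := by
    field_simp; ring
  rw [e1, e2] at hb'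
  nlinarith [hb', hd, sq_nonneg (u*y-v*x), mul_pos hd hd]

private lemma key_extract (x r t' : ℝ) (hb : 0 < t')
    (h1' : 4 * (x ^ 2 + 2 * r * x + r ^ 2) ≤ t' ^ 2) :
    2 * (x + r) ≤ t' := by
  apply le_of_pow_le_pow_left₀ (by norm_num : (2:ℕ) ≠ 0) hb.le
  nlinarith [h1']

private lemma final_contra (P Q r n t : ℝ) (hn0 : 0 ≤ n) (hn1 : n < 1) (ht0 : 0 < t)
    (hr : r = 2 * (1 - n) / (4 - n)) (hPQ : (P ^ 2 + Q ^ 2) * (4 - n) ^ 2 = 9 * n)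
    (hP : 0 ≤ P) (hQ : 0 ≤ Q)
    (key1 : 2 * (Q + r) ≤ 1 - t ^ 2) (key2 : 2 * (P + r) ≤ 1 + t ^ 2) : False := by
  have hd : (0:ℝ) < 4 - n := by linarith
  have hsum : P + Q + 2 * r ≤ 1 := by linarith
  have hrd : r * (4 - n) = 2 * (1 - n) := by rw [hr]; field_simp
  have hdm : (4 - n) * (P + Q) ≤ 3 * n := by
    have hmul := mul_le_mul_of_nonneg_left hsum hd.le
    nlinarith [hmul, hrd]
  have hdmn : 0 ≤ (4 - n) * (P + Q) := mul_nonneg hd.le (by linarith)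
  have hsq : ((4 - n) * (P + Q)) ^ 2 ≤ (3 * n) ^ 2 := by
    nlinarith [hdm, hdmn]
  have hn2 : n ≤ n ^ 2 := by
    nlinarith [hPQ, hsq, mul_nonneg hP hQ]
  have hnz : n = 0 := by nlinarith
  have hQz : Q = 0 := by
    rw [hnz] at hPQ
    nlinarith [sq_nonneg P, sq_nonneg Q]
  have hrv : r = 1 / 2 := by rw [hr, hnz]; norm_num
  rw [hQz, hrv] at key1
  nlinarith

/-- For `t ∈ (√3/2, 1)`, the elliptical disk
`E = {x+iy : 4x²/(1+t²)² + 4y²/(1-t²)² ≤ 1}` (the numerical range of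
`[[t,1-t²],[0,-t]]`) contains no pseudohyperbolic disk `D_ρ(z₀, 1/2)`. -/
theorem stmt_19 (t : ℝ) (ht0 : 0 < t) (ht1 : t < 1) (ht : Real.sqrt 3 / 2 < t)
    (z₀ : ℂ) (hz₀ : ‖z₀‖ < 1) :
    ¬ ({z : ℂ | ‖(z - z₀) / (1 - (starRingEnd ℂ) z₀ * z)‖ < 1 / 2} ⊆
      {z : ℂ | 4 * z.re ^ 2 / (1 + t ^ 2) ^ 2 + 4 * z.im ^ 2 / (1 - t ^ 2) ^ 2 ≤ 1}) := by
  intro hsub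
  obtain ⟨u, v, rfl⟩ : ∃ u v : ℝ, z₀ = Complex.mk u v := ⟨z₀.re, z₀.im, rfl⟩
  have hure : (Complex.mk u v).re = u := rfl
  have hvim : (Complex.mk u v).im = v := rfl
  have hn : ‖Complex.mk u v‖ ^ 2 = u ^ 2 + v ^ 2 := by rw [normsq_eq]
  have hn0 : (0:ℝ) ≤ u ^ 2 + v ^ 2 := by positivity
  have hn1 : u ^ 2 + v ^ 2 < 1 := by nlinarith [norm_nonneg (Complex.mk u v)]
  have hdpos : (0:ℝ) < 4 - (u ^ 2 + v ^ 2) := by linarith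
  set r : ℝ := 2 * (1 - (u ^ 2 + v ^ 2)) / (4 - (u ^ 2 + v ^ 2)) with hr
  have hrpos : 0 < r := div_pos (by linarith) hdpos
  set c : ℂ := (Complex.ofReal (3 / (4 - (u ^ 2 + v ^ 2)))) * Complex.mk u v with hc
  have hcre : c.re = 3 / (4 - (u ^ 2 + v ^ 2)) * u := by
    rw [hc, Complex.mul_re, Complex.ofReal_re, Complex.ofReal_im, hure, hvim]; ring
  have hcim : c.im = 3 / (4 - (u ^ 2 + v ^ 2)) * v := by
    rw [hc, Complex.mul_im, Complex.ofReal_re, Complex.ofReal_im, hure, hvim]; ring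
  -- ball ⊆ pseudohyperbolic disk
  have hball : Metric.ball c r ⊆
      {z : ℂ | ‖(z - (Complex.mk u v)) / (1 - (starRingEnd ℂ) (Complex.mk u v) * z)‖ < 1 / 2} := by
    intro z hz
    simp only [Metric.mem_ball, Complex.dist_eq] at hz
    by_cases hden : (1 - (starRingEnd ℂ) (Complex.mk u v) * z) = 0
    · simp [Set.mem_setOf_eq, hden]
    · have hdn : 0 < ‖1 - (starRingEnd ℂ) (Complex.mk u v) * z‖ := norm_pos_iff.mpr hden
      simp only [Set.mem_setOf_eq, norm_div]
      rw [div_lt_div_iff₀ hdn (by norm_num : (0:ℝ) < 2)]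
      have hzsq : ‖z - c‖ ^ 2 < r ^ 2 := by
        have := norm_nonneg (z - c)
        nlinarith
      rw [normsq_eq] at hzsq
      have e3 : (z - c).re = z.re - 3 / (4 - (u ^ 2 + v ^ 2)) * u := by
        rw [Complex.sub_re, hcre]
      have e4 : (z - c).im = z.im - 3 / (4 - (u ^ 2 + v ^ 2)) * v := by
        rw [Complex.sub_im, hcim]
      rw [e3, e4, hr] at hzsq
      have key := poly_core u v z.re z.im hn1 hzsq
      apply lt_of_pow_lt_pow_left₀ 2 (by positivity)
      have e1 : ‖z - Complex.mk u v‖ ^ 2 = (z.re - u) ^ 2 + (z.im - v) ^ 2 := by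
        rw [normsq_eq, Complex.sub_re, Complex.sub_im, hure, hvim]
      have e2 : ‖1 - (starRingEnd ℂ) (Complex.mk u v) * z‖ ^ 2
          = (1 - (u * z.re + v * z.im)) ^ 2 + (u * z.im - v * z.re) ^ 2 := by
        rw [normsq_eq, Complex.sub_re, Complex.sub_im, Complex.mul_re, Complex.mul_im]
        simp [hure, hvim]
        ring
      rw [mul_pow, mul_pow, e1, e2]
      nlinarith [key]
  -- E is closed
  have hE : IsClosed {z : ℂ | 4 * z.re ^ 2 / (1 + t ^ 2) ^ 2 + 4 * z.im ^ 2 / (1 - t ^ 2) ^ 2 ≤ 1} := by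
    apply isClosed_le _ continuous_const
    fun_prop
  have hcball : Metric.closedBall c r ⊆
      {z : ℂ | 4 * z.re ^ 2 / (1 + t ^ 2) ^ 2 + 4 * z.im ^ 2 / (1 - t ^ 2) ^ 2 ≤ 1} := by
    rw [← closure_ball c hrpos.ne']
    refine subset_trans (closure_mono (fun z hz => hsub (hball hz))) ?_
    rw [hE.closure_eq]
  set p : ℝ := c.re with hp
  set q : ℝ := c.im with hq
  set σ : ℝ := if 0 ≤ q then 1 else -1 with hσ
  set τ : ℝ := if 0 ≤ p then 1 else -1 with hτ
  have hσq : σ * q = |q| := by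
    rcases le_or_gt 0 q with h | h
    · simp [hσ, h, _root_.abs_of_nonneg h]
    · simp [hσ, not_le.mpr h, _root_.abs_of_neg h]
  have hτp : τ * p = |p| := by
    rcases le_or_gt 0 p with h | h
    · simp [hτ, h, _root_.abs_of_nonneg h]
    · simp [hτ, not_le.mpr h, _root_.abs_of_neg h]
  have hσ2 : σ ^ 2 = 1 := by
    rcases le_or_gt 0 q with h | h
    · simp [hσ, h]
    · simp [hσ, not_le.mpr h]
  have hτ2 : τ ^ 2 = 1 := by
    rcases le_or_gt 0 p with h | h
    · simp [hτ, h]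
    · simp [hτ, not_le.mpr h]
  have habsσ : |σ| = 1 := by
    rcases le_or_gt 0 q with h | h
    · simp [hσ, h]
    · simp [hσ, not_le.mpr h]
  have habsτ : |τ| = 1 := by
    rcases le_or_gt 0 p with h | h
    · simp [hτ, h]
    · simp [hτ, not_le.mpr h]
  have hz₁ : (c + (↑(r * σ)) * Complex.I) ∈ Metric.closedBall c r := by
    simp only [Metric.mem_closedBall, Complex.dist_eq]
    have e : c + (↑(r * σ)) * Complex.I - c = (↑(r * σ)) * Complex.I := by ring
    rw [e, norm_mul, Complex.norm_real, Complex.norm_I, mul_one, Real.norm_eq_abs,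
      abs_mul, habsσ, mul_one, _root_.abs_of_nonneg hrpos.le]
  have hz₂ : (c + (↑(r * τ) : ℂ)) ∈ Metric.closedBall c r := by
    simp only [Metric.mem_closedBall, Complex.dist_eq]
    have e : c + (↑(r * τ) : ℂ) - c = (↑(r * τ) : ℂ) := by ring
    rw [e, Complex.norm_real, Real.norm_eq_abs, abs_mul, habsτ, mul_one,
      _root_.abs_of_nonneg hrpos.le]
  have h1 := hcball hz₁
  have h2 := hcball hz₂
  have hre1 : (c + (↑(r * σ)) * Complex.I).re = p := by
    simp only [Complex.add_re, Complex.mul_re, Complex.I_re, Complex.I_im, Complex.ofReal_re,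
      Complex.ofReal_im]
    rw [hp]; ring
  have him1 : (c + (↑(r * σ)) * Complex.I).im = q + r * σ := by
    simp only [Complex.add_im, Complex.mul_im, Complex.I_re, Complex.I_im, Complex.ofReal_re,
      Complex.ofReal_im]
    rw [hq]; ring
  have hre2 : (c + (↑(r * τ) : ℂ)).re = p + r * τ := by
    simp only [Complex.add_re, Complex.ofReal_re]
    rw [hp]
  have him2 : (c + (↑(r * τ) : ℂ)).im = q := by
    simp only [Complex.add_im, Complex.ofReal_im]
    rw [hq]; ring
  rw [Set.mem_setOf_eq, hre1, him1] at h1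
  rw [Set.mem_setOf_eq, hre2, him2] at h2
  clear hsub hball hE hcball hz₁ hz₂ hre1 him1 hre2 him2 hz₀ hn hc hσ hτ
  clear_value r c p q σ τ
  clear hp hq c
  have ha : (0:ℝ) < 1 + t ^ 2 := by positivity
  have hb : (0:ℝ) < 1 - t ^ 2 := by
    have := pow_lt_one₀ ht0.le ht1 (two_ne_zero)
    linarith
  -- key1 : 2(|q| + r) ≤ 1 - t²
  have key1 : 2 * (|q| + r) ≤ 1 - t ^ 2 := by
    have h1' : 4 * (q + r * σ) ^ 2 ≤ (1 - t ^ 2) ^ 2 := by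
      have t1 : 0 ≤ 4 * p ^ 2 / (1 + t ^ 2) ^ 2 := by positivity
      have t2 : 4 * (q + r * σ) ^ 2 / (1 - t ^ 2) ^ 2 ≤ 1 := by linarith
      rw [div_le_one (by positivity)] at t2
      linarith
    have hexp : (q + r * σ) ^ 2 = |q| ^ 2 + 2 * r * |q| + r ^ 2 := by
      have e : (q + r * σ) ^ 2 = q ^ 2 + 2 * r * (σ * q) + r ^ 2 * σ ^ 2 := by ring
      rw [e, hσq, hσ2, _root_.sq_abs]; ring
    rw [hexp] at h1'
    exact key_extract |q| r _ hb h1'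
  have key2 : 2 * (|p| + r) ≤ 1 + t ^ 2 := by
    have h2' : 4 * (p + r * τ) ^ 2 ≤ (1 + t ^ 2) ^ 2 := by
      have t1 : 0 ≤ 4 * q ^ 2 / (1 - t ^ 2) ^ 2 := by positivity
      have t2 : 4 * (p + r * τ) ^ 2 / (1 + t ^ 2) ^ 2 ≤ 1 := by linarith
      rw [div_le_one (by positivity)] at t2
      linarith
    have hexp : (p + r * τ) ^ 2 = |p| ^ 2 + 2 * r * |p| + r ^ 2 := by
      have e : (p + r * τ) ^ 2 = p ^ 2 + 2 * r * (τ * p) + r ^ 2 * τ ^ 2 := by ring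
      rw [e, hτp, hτ2, _root_.sq_abs]; ring
    rw [hexp] at h2'
    exact key_extract |p| r _ ha h2'
  have hpqd : (|p| ^ 2 + |q| ^ 2) * (4 - (u ^ 2 + v ^ 2)) ^ 2 = 9 * (u ^ 2 + v ^ 2) := by
    rw [_root_.sq_abs, _root_.sq_abs, hcre, hcim]
    field_simp
    ring
  exact final_contra |p| |q| r (u ^ 2 + v ^ 2) t hn0 hn1 ht0 hr hpqd (abs_nonneg p)
    (abs_nonneg q) key1 key2
end
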